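/- Let L ∈ ℝ^{n×n} be the graph Laplacian of a strongly connected weighted directed graph on n nodes, let w be a vector with all entries strictly positive satisfying wᵀL = 0, set W = diag(w), and let G = diag(g_1,…,g_n) with g_i ≥ 0 for all i and g_i > 0 for at least one i. Then the matrix A = L + G is nonsingular and the symmetric matrix (L+G)ᵀW(L+G) is positive definite. -/

import Mathlib

open Matrix

lemma pinned_laplacian_ker_aux
    (n : ℕ) (a : Fin n → Fin n → ℝ) (L : Matrix (Fin n) (Fin n) ℝ)
    (hnn : ∀ i j, i ≠ j → 0 ≤ a i j)
    (hdiag : ∀ i, L i i = ∑ j ∈ Finset.univ.erase i, a i j)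
    (hoff : ∀ i j, i ≠ j → L i j = -a i j)
    (hsc : ∀ i j : Fin n, i ≠ j → Relation.TransGen (fun u v => 0 < a u v) i j)
    (g : Fin n → ℝ) (hg : ∀ i, 0 ≤ g i) (hg' : ∃ i, 0 < g i)
    (x : Fin n → ℝ) (hx : (L + Matrix.diagonal g) *ᵥ x = 0) : x = 0 := by
  by_contra hx0
  obtain ⟨k, hk⟩ := hg'
  have hne : (Finset.univ : Finset (Fin n)).Nonempty := ⟨k, Finset.mem_univ k⟩
  obtain ⟨i0, -, hi0⟩ := Finset.exists_max_image Finset.univ (fun i => |x i|) hne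
  set m := |x i0| with hm
  have hmpos : 0 < m := by
    obtain ⟨i, hi⟩ := Function.ne_iff.mp hx0
    exact lt_of_lt_of_le (abs_pos.mpr hi) (hi0 i (Finset.mem_univ i))
  have hrow : ∀ i : Fin n,
      (∑ j ∈ Finset.univ.erase i, a i j + g i) * x i
        = ∑ j ∈ Finset.univ.erase i, a i j * x j := by
    intro i
    have h0 : (L *ᵥ x) i + g i * x i = 0 := by
      have := congrFun hx i
      rwa [Matrix.add_mulVec, Pi.add_apply, Matrix.mulVec_diagonal, Pi.zero_apply] at this
    have h1 : (L *ᵥ x) i = L i i * x i + ∑ j ∈ Finset.univ.erase i, L i j * x j := by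
      show (∑ j, L i j * x j) = _
      rw [← Finset.add_sum_erase _ _ (Finset.mem_univ i)]
    have h2 : ∑ j ∈ Finset.univ.erase i, L i j * x j
        = -∑ j ∈ Finset.univ.erase i, a i j * x j := by
      rw [← Finset.sum_neg_distrib]
      refine Finset.sum_congr rfl fun j hj => ?_
      rw [hoff i j (Ne.symm (Finset.ne_of_mem_erase hj)), neg_mul]
    rw [h1, h2, hdiag i] at h0
    linarith [h0]
  have key : ∀ i : Fin n, |x i| = m →
      g i = 0 ∧ ∀ j, 0 < a i j → |x j| = m := by
    intro i hi
    have hS : 0 ≤ ∑ j ∈ Finset.univ.erase i, a i j :=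
      Finset.sum_nonneg fun j hj => hnn i j (Ne.symm (Finset.ne_of_mem_erase hj))
    set S := ∑ j ∈ Finset.univ.erase i, a i j with hSdef
    have habs1 : (S + g i) * m ≤ ∑ j ∈ Finset.univ.erase i, a i j * |x j| := by
      calc (S + g i) * m = |(S + g i) * x i| := by
            rw [abs_mul, hi, abs_of_nonneg (by linarith [hg i])]
        _ = |∑ j ∈ Finset.univ.erase i, a i j * x j| := by rw [hrow i]
        _ ≤ ∑ j ∈ Finset.univ.erase i, |a i j * x j| := Finset.abs_sum_le_sum_abs _ _
        _ = ∑ j ∈ Finset.univ.erase i, a i j * |x j| := by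
            refine Finset.sum_congr rfl fun j hj => ?_
            rw [abs_mul, abs_of_nonneg (hnn i j (Ne.symm (Finset.ne_of_mem_erase hj)))]
    have habs2 : ∑ j ∈ Finset.univ.erase i, a i j * |x j| ≤ S * m := by
      rw [hSdef, Finset.sum_mul]
      refine Finset.sum_le_sum fun j hj => ?_
      exact mul_le_mul_of_nonneg_left (hi0 j (Finset.mem_univ j))
        (hnn i j (Ne.symm (Finset.ne_of_mem_erase hj)))
    have hgi : g i = 0 := by nlinarith [hg i]
    refine ⟨hgi, fun j haj => ?_⟩
    by_cases hji : j = i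
    · rw [hji]; exact hi
    · have heq : ∑ j ∈ Finset.univ.erase i, a i j * |x j|
          = ∑ j ∈ Finset.univ.erase i, a i j * m := by
        rw [← Finset.sum_mul, ← hSdef]
        nlinarith
      have hterm := (Finset.sum_eq_sum_iff_of_le (fun j hj =>
        mul_le_mul_of_nonneg_left (hi0 j (Finset.mem_univ j))
          (hnn i j (Ne.symm (Finset.ne_of_mem_erase hj))))).mp heq j
          (Finset.mem_erase.mpr ⟨hji, Finset.mem_univ j⟩)
      exact mul_left_cancel₀ (ne_of_gt haj) hterm
  have propagate : ∀ jj : Fin n,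
      Relation.TransGen (fun u v => 0 < a u v) i0 jj → |x jj| = m := by
    intro jj h
    induction h with
    | single h => exact (key i0 hm.symm).2 _ h
    | tail _ h ih => exact (key _ ih).2 _ h
  have hgk : g k = 0 := by
    by_cases hk0 : k = i0
    · rw [hk0]; exact (key i0 hm.symm).1
    · exact (key k (propagate k (hsc i0 k (Ne.symm hk0)))).1
  exact absurd hgk hk.ne'

/-- For the graph Laplacian `L` of a strongly connected weighted directed graph, a positive
left null vector `w` of `L`, `W = diag w`, and a pinning-gain matrix `G = diag g` with
`g i ≥ 0` for all `i` and `g i > 0` for at least one `i`, the matrix `A = L + G` is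
nonsingular and the symmetric matrix `(L + G)ᵀ W (L + G)` is positive definite. -/
theorem pinned_laplacian_nonsingular_and_AtWA_posDef
    (n : ℕ) (a : Fin n → Fin n → ℝ) (L : Matrix (Fin n) (Fin n) ℝ)
    (hnn : ∀ i j, i ≠ j → 0 ≤ a i j)
    (hdiag : ∀ i, L i i = ∑ j ∈ Finset.univ.erase i, a i j)
    (hoff : ∀ i j, i ≠ j → L i j = -a i j)
    (hsc : ∀ i j : Fin n, i ≠ j → Relation.TransGen (fun u v => 0 < a u v) i j)
    (w : Fin n → ℝ) (hw : ∀ i, 0 < w i) (hwL : Matrix.vecMul w L = 0)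
    (g : Fin n → ℝ) (hg : ∀ i, 0 ≤ g i) (hg' : ∃ i, 0 < g i) :
    (L + Matrix.diagonal g).det ≠ 0 ∧
      ((L + Matrix.diagonal g)ᵀ * Matrix.diagonal w * (L + Matrix.diagonal g)).PosDef := by
  classical
  set A := L + Matrix.diagonal g with hA
  have hker : ∀ x, A *ᵥ x = 0 → x = 0 :=
    pinned_laplacian_ker_aux n a L hnn hdiag hoff hsc g hg hg'
  have hdet : A.det ≠ 0 := by
    intro h
    obtain ⟨v, hv, hv0⟩ := (Matrix.exists_mulVec_eq_zero_iff).mpr h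
    exact hv (hker v hv0)
  refine ⟨hdet, ?_⟩
  have hW : (Matrix.diagonal w).PosDef := Matrix.PosDef.diagonal hw
  rw [show Aᵀ = Aᴴ from rfl]
  refine Matrix.PosDef.of_dotProduct_mulVec_pos (Matrix.isHermitian_conjTranspose_mul_mul A hW.1) fun x hx => ?_
  have hAx : A *ᵥ x ≠ 0 := fun h => hx (hker x h)
  simpa only [star_mulVec, dotProduct_mulVec, vecMul_vecMul] using hW.dotProduct_mulVec_pos hAx
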